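/- Let (X,Y) have the survival copula of the Nelsen 4.2.15 copula with parameter α > 1 on generalized Pareto margins with shape ξ_m = -1/α and unit scale. Then in L^1 polar coordinates R = X+Y, Q = Y/R, the upper endpoint of R given Q = q is r_F(q) = α/((1-q)^α + q^α)^{1/α}, the angular density is f_Q(q) = α(q(1-q))^{α-1}((1-q)^α + q^α)^{-2}, and the conditional radial density satisfies f_{R|Q}(r_F(q) - s | q) = α^{1-α}(α-1)((1-q)^α + q^α)^{1-1/α}·s^{α-2}, which is exactly a generalized Pareto density with shape ξ = -1/(α-1). -/

import Mathlib

open MeasureTheory Set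

/-- Density of the Nelsen 4.2.15 copula with parameter `α > 1`, supported on
`{(1-u^{1/α})^α + (1-v^{1/α})^α ≤ 1}`. -/
noncomputable def nelsenDens (α u v : ℝ) : ℝ :=
  if 0 < u ∧ u ≤ 1 ∧ 0 < v ∧ v ≤ 1 ∧
      (1 - u ^ (1 / α)) ^ α + (1 - v ^ (1 / α)) ^ α ≤ 1 then
    (1 - 1 / α) * (u * v) ^ (1 / α - 1) *
      ((1 - u ^ (1 / α)) * (1 - v ^ (1 / α))) ^ (α - 1) *
      ((1 - u ^ (1 / α)) ^ α + (1 - v ^ (1 / α)) ^ α) ^ (1 / α - 2) *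
      (1 - ((1 - u ^ (1 / α)) ^ α + (1 - v ^ (1 / α)) ^ α) ^ (1 / α)) ^ (α - 2)
  else 0

/-- GP density with shape `ξ_m = -1/α` and unit scale: `(1-x/α)^{α-1}` on `[0,α]`. -/
noncomputable def gpDensN (α x : ℝ) : ℝ :=
  if 0 ≤ x ∧ x ≤ α then (1 - x / α) ^ (α - 1) else 0

/-- GP cdf with shape `ξ_m = -1/α` and unit scale. -/
noncomputable def gpCdfN (α x : ℝ) : ℝ :=
  if x < 0 then 0 else if x ≤ α then 1 - (1 - x / α) ^ α else 1

/-- Angular-radial density of `(R,Q) = (X+Y, Y/(X+Y))` for the Nelsen 4.2.15 survival copula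
`ĉ(u,v) = c(1-u,1-v)` on GP margins with shape `-1/α`. -/
noncomputable def nelsenRQ (α r q : ℝ) : ℝ :=
  r * gpDensN α (r * (1 - q)) * gpDensN α (r * q) *
    nelsenDens α (1 - gpCdfN α (r * (1 - q))) (1 - gpCdfN α (r * q))

/-- Upper endpoint of `R` given `Q = q`: `r_F(q) = α/((1-q)^α + q^α)^{1/α}`. -/
noncomputable def rFN (α q : ℝ) : ℝ := α / ((1 - q) ^ α + q ^ α) ^ (1 / α)

lemma eq_of_log_eq (x y : ℝ) (hx : 0 < x) (hy : 0 < y)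
    (h : Real.log x = Real.log y) : x = y := by
  rw [← Real.exp_log hx, h, Real.exp_log hy]

lemma rpow_rpow_inv' (x α : ℝ) (hx : 0 ≤ x) (hα : α ≠ 0) : (x ^ α) ^ (1/α) = x := by
  rw [← Real.rpow_mul hx, mul_one_div_cancel hα, Real.rpow_one]

lemma key (α q r : ℝ) (hα : 1 < α) (hq : q ∈ Set.Ioo (0:ℝ) 1) (hr : 0 < r)
    (hrF : r < rFN α q) :
    nelsenRQ α r q = (α - 1) * (q * (1 - q)) ^ (α - 1) *
      ((1 - q) ^ α + q ^ α) ^ (1 / α - 2) *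
      (1 - r * ((1 - q) ^ α + q ^ α) ^ (1 / α) / α) ^ (α - 2) := by
  obtain ⟨hq0, hq1⟩ := hq
  have hα0 : (0:ℝ) < α := by linarith
  have h1q : (0:ℝ) < 1 - q := by linarith
  have hA : 0 < (1 - q) ^ α + q ^ α := by positivity
  have hA1 : (0:ℝ) < ((1 - q) ^ α + q ^ α) ^ (1/α) := by positivity
  rw [rFN, lt_div_iff₀ hA1] at hrF
  -- hrF : r * (...)^(1/α) < α
  have hqA : q ≤ ((1 - q) ^ α + q ^ α) ^ (1/α) := by
    calc q = (q ^ α) ^ (1/α) := (rpow_rpow_inv' _ _ hq0.le hα0.ne').symm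
    _ ≤ ((1 - q) ^ α + q ^ α) ^ (1/α) :=
        Real.rpow_le_rpow (by positivity) (by nlinarith [Real.rpow_pos_of_pos h1q α]) (by positivity)
  have h1qA : 1 - q ≤ ((1 - q) ^ α + q ^ α) ^ (1/α) := by
    calc 1 - q = ((1 - q) ^ α) ^ (1/α) := (rpow_rpow_inv' _ _ h1q.le hα0.ne').symm
    _ ≤ ((1 - q) ^ α + q ^ α) ^ (1/α) :=
        Real.rpow_le_rpow (by positivity) (by nlinarith [Real.rpow_pos_of_pos hq0 α]) (by positivity)
  have hx0 : 0 < r * (1 - q) := by positivity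
  have hy0 : 0 < r * q := by positivity
  have hxα : r * (1 - q) < α :=
    lt_of_le_of_lt (by nlinarith) hrF
  have hyα : r * q < α :=
    lt_of_le_of_lt (by nlinarith) hrF
  have ha : 0 < 1 - r * (1 - q) / α := by
    rw [sub_pos, div_lt_one hα0]; exact hxα
  have hb : 0 < 1 - r * q / α := by
    rw [sub_pos, div_lt_one hα0]; exact hyα
  have hW : 0 < 1 - r * ((1 - q) ^ α + q ^ α) ^ (1/α) / α := by
    rw [sub_pos, div_lt_one hα0]; exact hrF
  -- unfold the definitions
  rw [nelsenRQ, gpDensN, gpDensN, gpCdfN, gpCdfN,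
    if_pos ⟨hx0.le, hxα.le⟩, if_pos ⟨hy0.le, hyα.le⟩,
    if_neg (not_lt.mpr hx0.le), if_neg (not_lt.mpr hy0.le),
    if_pos hxα.le, if_pos hyα.le]
  simp only [sub_sub_cancel]
  rw [nelsenDens]
  rw [rpow_rpow_inv' _ _ ha.le hα0.ne', rpow_rpow_inv' _ _ hb.le hα0.ne']
  simp only [sub_sub_cancel]
  -- the sum S
  have hS : (r * (1 - q) / α) ^ α + (r * q / α) ^ α
      = (r / α) ^ α * ((1 - q) ^ α + q ^ α) := by
    rw [show r * (1 - q) / α = (r / α) * (1 - q) by ring,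
      show r * q / α = (r / α) * q by ring,
      Real.mul_rpow (by positivity) (by positivity),
      Real.mul_rpow (by positivity) (by positivity)]
    ring
  have hS1 : ((r / α) ^ α * ((1 - q) ^ α + q ^ α)) ^ (1/α)
      = r * ((1 - q) ^ α + q ^ α) ^ (1/α) / α := by
    rw [Real.mul_rpow (by positivity) (by positivity),
      rpow_rpow_inv' _ _ (by positivity) hα0.ne']
    ring
  rw [hS, hS1]
  have hcond : (r / α) ^ α * ((1 - q) ^ α + q ^ α) ≤ 1 := by
    have h2 : (r / α) ^ α * ((1 - q) ^ α + q ^ α)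
        = (r * ((1 - q) ^ α + q ^ α) ^ (1/α) / α) ^ α := by
      rw [show r * ((1 - q) ^ α + q ^ α) ^ (1/α) / α
          = (r / α) * ((1 - q) ^ α + q ^ α) ^ (1/α) by ring,
        Real.mul_rpow (by positivity) (by positivity),
        ← Real.rpow_mul hA.le, one_div_mul_cancel hα0.ne', Real.rpow_one]
    rw [h2]
    calc (r * ((1 - q) ^ α + q ^ α) ^ (1/α) / α) ^ α
        ≤ 1 ^ α := Real.rpow_le_rpow (by positivity)
          (by rw [div_le_one hα0]; exact hrF.le) hα0.le
      _ = 1 := Real.one_rpow α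
  rw [if_pos]
  · -- main algebraic identity via logs
    have hβ : (0:ℝ) < α - 1 := by linarith
    have hone : (1:ℝ) - 1/α = (α - 1)/α := by field_simp
    rw [hone]
    set c := 1 - q with hc
    set β := α - 1 with hβdef
    set A := c ^ α + q ^ α with hAdef
    set a := 1 - r * c / α with hadef
    set b := 1 - r * q / α with hbdef
    set W := 1 - r * A ^ (1/α) / α with hWdef
    have hLpos : 0 < r * a ^ β * b ^ β *
        (β / α * ((a ^ α * b ^ α) ^ (1/α - 1)) * (r * c / α * (r * q / α)) ^ β *
          ((r / α) ^ α * A) ^ (1/α - 2) * W ^ (α - 2)) := by positivity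
    have hRpos : 0 < β * (q * c) ^ β * A ^ (1/α - 2) * W ^ (α - 2) := by positivity
    refine eq_of_log_eq _ _ hLpos hRpos ?_
    simp (disch := positivity) only [Real.log_mul, Real.log_rpow, Real.log_div,
      ne_eq, mul_ne_zero_iff]
    rw [hβdef]
    field_simp
    ring
  · refine ⟨by positivity, ?_, by positivity, ?_, hcond⟩
    · exact Real.rpow_le_one ha.le (by linarith [div_nonneg (mul_nonneg hr.le h1q.le) hα0.le]) hα0.le
    · exact Real.rpow_le_one hb.le (by linarith [div_nonneg (mul_nonneg hr.le hq0.le) hα0.le]) hα0.le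

lemma keyzero (α q r : ℝ) (hα : 1 < α) (hq : q ∈ Set.Ioo (0:ℝ) 1) (hrF : rFN α q < r) :
    nelsenRQ α r q = 0 := by
  obtain ⟨hq0, hq1⟩ := hq
  have hα0 : (0:ℝ) < α := by linarith
  have h1q : (0:ℝ) < 1 - q := by linarith
  have hA : 0 < (1 - q) ^ α + q ^ α := by positivity
  have hA1 : 0 < ((1 - q) ^ α + q ^ α) ^ (1/α) := by positivity
  have hrFpos : 0 < rFN α q := by rw [rFN]; positivity
  have hr : 0 < r := hrFpos.trans hrF
  rw [rFN, div_lt_iff₀ hA1] at hrF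
  by_cases hxα : r * (1 - q) ≤ α
  swap
  · rw [nelsenRQ, gpDensN, if_neg (by push_neg; intro _; linarith)]; ring
  by_cases hyα : r * q ≤ α
  swap
  · rw [nelsenRQ, gpDensN, gpDensN, if_neg (show ¬(0 ≤ r * q ∧ r * q ≤ α) by
      push_neg; intro _; linarith)]
    ring
  have hgx : 1 - gpCdfN α (r * (1 - q)) = (1 - r * (1 - q) / α) ^ α := by
    rw [gpCdfN, if_neg (not_lt.mpr (by positivity : (0:ℝ) ≤ r * (1 - q))), if_pos hxα]; ring
  have hgy : 1 - gpCdfN α (r * q) = (1 - r * q / α) ^ α := by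
    rw [gpCdfN, if_neg (not_lt.mpr (by positivity : (0:ℝ) ≤ r * q)), if_pos hyα]; ring
  rw [nelsenRQ, hgx, hgy, nelsenDens, if_neg, mul_zero]
  rintro ⟨hu, -, hv, -, hsum⟩
  have hax : 0 < 1 - r * (1 - q) / α := by
    rcases lt_or_eq_of_le (show (0:ℝ) ≤ 1 - r * (1 - q) / α by
      rw [sub_nonneg, div_le_one hα0]; exact hxα) with h | h
    · exact h
    · rw [← h, Real.zero_rpow hα0.ne'] at hu; exact absurd hu (lt_irrefl 0)
  have hay : 0 < 1 - r * q / α := by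
    rcases lt_or_eq_of_le (show (0:ℝ) ≤ 1 - r * q / α by
      rw [sub_nonneg, div_le_one hα0]; exact hyα) with h | h
    · exact h
    · rw [← h, Real.zero_rpow hα0.ne'] at hv; exact absurd hv (lt_irrefl 0)
  rw [rpow_rpow_inv' _ _ hax.le hα0.ne', rpow_rpow_inv' _ _ hay.le hα0.ne'] at hsum
  simp only [sub_sub_cancel] at hsum
  have hS : (r * (1 - q) / α) ^ α + (r * q / α) ^ α
      = (r / α) ^ α * ((1 - q) ^ α + q ^ α) := by
    rw [show r * (1 - q) / α = (r / α) * (1 - q) by ring,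
      show r * q / α = (r / α) * q by ring,
      Real.mul_rpow (by positivity) (by positivity),
      Real.mul_rpow (by positivity) (by positivity)]
    ring
  have h2 : (r / α) ^ α * ((1 - q) ^ α + q ^ α)
      = (r * ((1 - q) ^ α + q ^ α) ^ (1/α) / α) ^ α := by
    rw [show r * ((1 - q) ^ α + q ^ α) ^ (1/α) / α
        = (r / α) * ((1 - q) ^ α + q ^ α) ^ (1/α) by ring,
      Real.mul_rpow (by positivity) (by positivity),
      ← Real.rpow_mul hA.le, one_div_mul_cancel hα0.ne', Real.rpow_one]
  have hgt : (1:ℝ) < (r / α) ^ α * ((1 - q) ^ α + q ^ α) := by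
    rw [h2]
    calc (1:ℝ) = 1 ^ α := (Real.one_rpow α).symm
    _ < (r * ((1 - q) ^ α + q ^ α) ^ (1/α) / α) ^ α := by
        apply Real.rpow_lt_rpow (by norm_num) _ hα0
        rw [lt_div_iff₀ hα0]; linarith
  rw [hS] at hsum
  linarith

lemma intlemma (α q : ℝ) (hα : 1 < α) (hq : q ∈ Set.Ioo (0:ℝ) 1) :
    (∫ r in Set.Ioi (0:ℝ), nelsenRQ α r q)
      = α * (q * (1 - q)) ^ (α - 1) * ((1 - q) ^ α + q ^ α) ^ (-(2:ℝ)) := by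
  obtain ⟨hq0, hq1⟩ := hq
  have hα0 : (0:ℝ) < α := by linarith
  have hβ : (0:ℝ) < α - 1 := by linarith
  have h1q : (0:ℝ) < 1 - q := by linarith
  have hA : 0 < (1 - q) ^ α + q ^ α := by positivity
  have hB : 0 < ((1 - q) ^ α + q ^ α) ^ (1/α) := by positivity
  have hrF : 0 < rFN α q := by rw [rFN]; positivity
  have step1 : (∫ r in Set.Ioi (0:ℝ), nelsenRQ α r q)
      = ∫ r in Set.Ioo 0 (rFN α q), nelsenRQ α r q := by
    have h1 : ({rFN α q} : Set ℝ)ᶜ ∈ MeasureTheory.ae MeasureTheory.volume :=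
      MeasureTheory.compl_mem_ae_iff.mpr (MeasureTheory.measure_singleton _)
    have hae : ∀ᵐ r ∂(MeasureTheory.volume.restrict (Set.Ioi (0:ℝ))),
        nelsenRQ α r q = (Set.Ioo 0 (rFN α q)).indicator (fun r => nelsenRQ α r q) r := by
      rw [MeasureTheory.ae_restrict_iff' measurableSet_Ioi]
      filter_upwards [h1] with r hne hr
      simp only [Set.mem_compl_iff, Set.mem_singleton_iff] at hne
      by_cases hcase : r < rFN α q
      · rw [Set.indicator_of_mem (Set.mem_Ioo.mpr ⟨hr, hcase⟩)]
      · have hgt : rFN α q < r := lt_of_le_of_ne (not_lt.mp hcase) (Ne.symm hne)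
        rw [Set.indicator_of_notMem (by simp only [Set.mem_Ioo, not_and]; intro _; linarith),
          keyzero α q r hα (Set.mem_Ioo.mpr ⟨hq0, hq1⟩) hgt]
    rw [MeasureTheory.integral_congr_ae hae,
      MeasureTheory.setIntegral_indicator measurableSet_Ioo,
      Set.inter_eq_self_of_subset_right Set.Ioo_subset_Ioi_self]
  have hfac : ∀ r ∈ Set.Ioo 0 (rFN α q),
      nelsenRQ α r q = ((α - 1) * (q * (1 - q)) ^ (α - 1) *
        ((1 - q) ^ α + q ^ α) ^ (1/α - 2) * (((1 - q) ^ α + q ^ α) ^ (1/α) / α) ^ (α - 2)) *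
        (rFN α q - r) ^ (α - 2) := by
    intro r hr
    rw [key α q r hα (Set.mem_Ioo.mpr ⟨hq0, hq1⟩) hr.1 hr.2]
    have hre : 1 - r * ((1 - q) ^ α + q ^ α) ^ (1/α) / α
        = (((1 - q) ^ α + q ^ α) ^ (1/α) / α) * (rFN α q - r) := by
      rw [rFN]; field_simp
    rw [hre, Real.mul_rpow (by positivity) (by linarith [hr.2] : (0:ℝ) ≤ rFN α q - r)]
    ring
  have step2 : (∫ r in Set.Ioo 0 (rFN α q), nelsenRQ α r q)
      = ((α - 1) * (q * (1 - q)) ^ (α - 1) *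
        ((1 - q) ^ α + q ^ α) ^ (1/α - 2) * (((1 - q) ^ α + q ^ α) ^ (1/α) / α) ^ (α - 2)) *
        ∫ r in Set.Ioo 0 (rFN α q), (rFN α q - r) ^ (α - 2) := by
    rw [← MeasureTheory.integral_const_mul]
    exact MeasureTheory.setIntegral_congr_fun measurableSet_Ioo hfac
  have step3 : (∫ r in Set.Ioo 0 (rFN α q), (rFN α q - r) ^ (α - 2))
      = (rFN α q) ^ (α - 1) / (α - 1) := by
    rw [← MeasureTheory.integral_Ioc_eq_integral_Ioo,
      ← intervalIntegral.integral_of_le hrF.le,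
      intervalIntegral.integral_comp_sub_left (fun s => s ^ (α - 2)) (rFN α q)]
    simp only [sub_self, sub_zero]
    rw [integral_rpow (Or.inl (by linarith))]
    rw [Real.zero_rpow (by intro h; linarith [h] : α - 2 + 1 ≠ 0)]
    rw [show α - 2 + 1 = α - 1 by ring]
    ring
  rw [step1, step2, step3, rFN]
  -- final constants identity via logs
  refine eq_of_log_eq _ _ (by positivity) (by positivity) ?_
  simp (disch := positivity) only [Real.log_mul, Real.log_rpow, Real.log_div,
    ne_eq, mul_ne_zero_iff]
  field_simp
  ring

lemma part2 (α q : ℝ) (hα : 1 < α) (hq : q ∈ Set.Ioo (0:ℝ) 1)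
    (s : ℝ) (hs : s ∈ Set.Ioo (0:ℝ) (rFN α q)) :
    nelsenRQ α (rFN α q - s) q
      = α ^ (2 - α) * (α - 1) * (q * (1 - q)) ^ (α - 1) *
          ((1 - q) ^ α + q ^ α) ^ (-1 / α - 1) * s ^ (α - 2) := by
  obtain ⟨hq0, hq1⟩ := hq
  obtain ⟨hs0, hs1⟩ := hs
  have hα0 : (0:ℝ) < α := by linarith
  have hβ : (0:ℝ) < α - 1 := by linarith
  have h1q : (0:ℝ) < 1 - q := by linarith
  have hA : 0 < (1 - q) ^ α + q ^ α := by positivity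
  have hB : 0 < ((1 - q) ^ α + q ^ α) ^ (1/α) := by positivity
  have hr0 : 0 < rFN α q - s := by linarith
  have hrlt : rFN α q - s < rFN α q := by linarith
  rw [key α q _ hα (Set.mem_Ioo.mpr ⟨hq0, hq1⟩) hr0 hrlt]
  have hW : 1 - (rFN α q - s) * ((1 - q) ^ α + q ^ α) ^ (1/α) / α
      = s * (((1 - q) ^ α + q ^ α) ^ (1/α) / α) := by
    rw [rFN]; field_simp; ring
  rw [hW]
  refine eq_of_log_eq _ _ (by positivity) (by positivity) ?_
  simp (disch := positivity) only [Real.log_mul, Real.log_rpow, Real.log_div,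
    ne_eq, mul_ne_zero_iff]
  field_simp
  ring

lemma part4 (α q : ℝ) (hα : 1 < α) (hq : q ∈ Set.Ioo (0:ℝ) 1)
    (s : ℝ) (hs : s ∈ Set.Ioo (0:ℝ) (rFN α q)) :
    nelsenRQ α (rFN α q - s) q / (∫ r in Set.Ioi (0:ℝ), nelsenRQ α r q)
      = α ^ (1 - α) * (α - 1) * ((1 - q) ^ α + q ^ α) ^ (1 - 1 / α) * s ^ (α - 2) := by
  obtain ⟨hq0, hq1⟩ := hq
  obtain ⟨hs0, hs1⟩ := hs
  have hα0 : (0:ℝ) < α := by linarith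
  have hβ : (0:ℝ) < α - 1 := by linarith
  have h1q : (0:ℝ) < 1 - q := by linarith
  have hA : 0 < (1 - q) ^ α + q ^ α := by positivity
  rw [part2 α q hα (Set.mem_Ioo.mpr ⟨hq0, hq1⟩) s (Set.mem_Ioo.mpr ⟨hs0, hs1⟩),
    intlemma α q hα (Set.mem_Ioo.mpr ⟨hq0, hq1⟩)]
  refine eq_of_log_eq _ _ (by positivity) (by positivity) ?_
  simp (disch := positivity) only [Real.log_mul, Real.log_rpow, Real.log_div,
    ne_eq, mul_ne_zero_iff]
  field_simp
  ring

/-- Nelsen 4.2.15 survival copula on GP margins with shape `ξ_m = -1/α`, `α > 1`: the radial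
endpoint is `r_F(q) = α/((1-q)^α+q^α)^{1/α}`, the angular density is
`α(q(1-q))^{α-1}((1-q)^α+q^α)^{-2}`, and the conditional radial density at distance `s`
below the endpoint equals `α^{1-α}(α-1)((1-q)^α+q^α)^{1-1/α}·s^{α-2}`, exactly a
generalized Pareto density with shape `ξ = -1/(α-1)`. -/
theorem stmt15 (α : ℝ) (hα : 1 < α) :
    (∀ q ∈ Set.Ioo (0 : ℝ) 1, ∀ r : ℝ, rFN α q < r → nelsenRQ α r q = 0) ∧
    (∀ q ∈ Set.Ioo (0 : ℝ) 1, ∀ s ∈ Set.Ioo (0 : ℝ) (rFN α q),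
      nelsenRQ α (rFN α q - s) q
        = α ^ (2 - α) * (α - 1) * (q * (1 - q)) ^ (α - 1) *
            ((1 - q) ^ α + q ^ α) ^ (-1 / α - 1) * s ^ (α - 2)) ∧
    (∀ q ∈ Set.Ioo (0 : ℝ) 1,
      (∫ r in Set.Ioi (0 : ℝ), nelsenRQ α r q)
        = α * (q * (1 - q)) ^ (α - 1) * ((1 - q) ^ α + q ^ α) ^ (-(2 : ℝ))) ∧
    (∀ q ∈ Set.Ioo (0 : ℝ) 1, ∀ s ∈ Set.Ioo (0 : ℝ) (rFN α q),
      nelsenRQ α (rFN α q - s) q / (∫ r in Set.Ioi (0 : ℝ), nelsenRQ α r q)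
        = α ^ (1 - α) * (α - 1) * ((1 - q) ^ α + q ^ α) ^ (1 - 1 / α) * s ^ (α - 2)) ∧
    (∃ σ : ℝ → ℝ, ∀ q ∈ Set.Ioo (0 : ℝ) 1, 0 < σ q ∧
      ∀ s ∈ Set.Ioo (0 : ℝ) (rFN α q),
        nelsenRQ α (rFN α q - s) q / (∫ r in Set.Ioi (0 : ℝ), nelsenRQ α r q)
          = (σ q) ^ (1 / (-1 / (α - 1))) *
              (-(-1 / (α - 1)) * s) ^ (-1 - 1 / (-1 / (α - 1)))) := by
  refine ⟨fun q hq r hr => keyzero α q r hα hq hr,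
    fun q hq s hs => part2 α q hα hq s hs,
    fun q hq => intlemma α q hα hq,
    fun q hq s hs => part4 α q hα hq s hs,
    ⟨fun q => α / ((α - 1) * ((1 - q) ^ α + q ^ α) ^ (1/α)), fun q hq => ?_⟩⟩
  obtain ⟨hq0, hq1⟩ := hq
  have hα0 : (0:ℝ) < α := by linarith
  have hβ : (0:ℝ) < α - 1 := by linarith
  have h1q : (0:ℝ) < 1 - q := by linarith
  have hA : 0 < (1 - q) ^ α + q ^ α := by positivity
  have hB : 0 < ((1 - q) ^ α + q ^ α) ^ (1/α) := by positivity
  refine ⟨by positivity, fun s hs => ?_⟩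
  obtain ⟨hs0, hs1⟩ := hs
  rw [part4 α q hα (Set.mem_Ioo.mpr ⟨hq0, hq1⟩) s (Set.mem_Ioo.mpr ⟨hs0, hs1⟩)]
  have e1 : 1 / (-1 / (α - 1)) = 1 - α := by field_simp; ring
  have e2 : (-1:ℝ) - 1 / (-1 / (α - 1)) = α - 2 := by rw [e1]; ring
  have e3 : -(-1 / (α - 1)) = 1 / (α - 1) := by ring
  rw [e2, e3, e1]
  beta_reduce
  refine eq_of_log_eq _ _ (by positivity) (by positivity) ?_
  simp (disch := positivity) only [Real.log_mul, Real.log_rpow, Real.log_div,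
    Real.log_one, ne_eq, mul_ne_zero_iff, one_ne_zero, not_false_eq_true]
  field_simp
  ring
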